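/- For any non-negative matrix B ∈ ℝ^{d×d}_{≥0}, non-negative vectors x₁, x₂, y₁, y₂ ∈ ℝ^d, and non-negative scalars w_{11}, w_{12}, w_{21}, w_{22}, the following inequality holds: per([[B, y₁, y₂],[x₁^T, w₁₁, w₁₂],[x₂^T, w₂₁, w₂₂]]) · per(B) ≤ per([[B, y₁],[x₁^T, w₁₁]]) · per([[B, y₂],[x₂^T, w₂₂]]) + per([[B, y₂],[x₁^T, w₁₂]]) · per([[B, y₁],[x₂^T, w₂₁]]). -/

import Mathlib

open Matrix BigOperators
open Equiv Equiv.Perm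

/-- The permanent of a square matrix. -/
noncomputable def per {α : Type*} [DecidableEq α] [Fintype α] (A : Matrix α α ℝ) : ℝ :=
  ∑ σ : Equiv.Perm α, ∏ i, A i (σ i)

/-- The `(d+1)×(d+1)` block matrix `[[B, y],[xᵀ, w]]`. -/
noncomputable def blk1 {d : ℕ} (B : Matrix (Fin d) (Fin d) ℝ) (x y : Fin d → ℝ) (w : ℝ) :
    Matrix (Fin d ⊕ Fin 1) (Fin d ⊕ Fin 1) ℝ :=
  Matrix.fromBlocks B (Matrix.of fun i (_ : Fin 1) => y i)
    (Matrix.of fun (_ : Fin 1) j => x j) (Matrix.of fun (_ : Fin 1) (_ : Fin 1) => w)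

/-- The `(d+2)×(d+2)` block matrix `[[B, y₁, y₂],[x₁ᵀ, w₁₁, w₁₂],[x₂ᵀ, w₂₁, w₂₂]]`. -/
noncomputable def blk2 {d : ℕ} (B : Matrix (Fin d) (Fin d) ℝ) (x₁ x₂ y₁ y₂ : Fin d → ℝ)
    (w₁₁ w₁₂ w₂₁ w₂₂ : ℝ) : Matrix (Fin d ⊕ Fin 2) (Fin d ⊕ Fin 2) ℝ :=
  Matrix.fromBlocks B
    (Matrix.of fun i j => if j = (0 : Fin 2) then y₁ i else y₂ i)
    (Matrix.of fun i j => if i = (0 : Fin 2) then x₁ j else x₂ j)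
    !![w₁₁, w₁₂; w₂₁, w₂₂]

namespace Stmt5Aux

variable {d : ℕ}

/-- Collapse `Fin 2` tag to `Fin 1`. -/
def kap : Fin d ⊕ Fin 2 → Fin d ⊕ Fin 1 := Sum.map id fun _ => 0
/-- Embed with tag `0`. -/
def io1 : Fin d ⊕ Fin 1 → Fin d ⊕ Fin 2 := Sum.map id fun _ => 0
/-- Embed with tag `1`. -/
def io2 : Fin d ⊕ Fin 1 → Fin d ⊕ Fin 2 := Sum.map id fun _ => 1

lemma kap_io1 (y : Fin d ⊕ Fin 1) : kap (io1 y) = y := by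
  rcases y with a | j
  · rfl
  · exact congrArg Sum.inr (Subsingleton.elim _ _)

lemma kap_io2 (y : Fin d ⊕ Fin 1) : kap (io2 y) = y := by
  rcases y with a | j
  · rfl
  · exact congrArg Sum.inr (Subsingleton.elim _ _)

lemma io1_kap {z : Fin d ⊕ Fin 2} (h : z ≠ .inr 1) : io1 (kap z) = z := by
  rcases z with a | j
  · rfl
  · fin_cases j
    · rfl
    · exact absurd rfl h

lemma io2_kap {z : Fin d ⊕ Fin 2} (h : z ≠ .inr 0) : io2 (kap z) = z := by
  rcases z with a | j
  · rfl
  · fin_cases j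
    · exact absurd rfl h
    · rfl

lemma io1_ne (y : Fin d ⊕ Fin 1) : io1 y ≠ .inr 1 := by
  rcases y with a | j <;> simp [io1]

lemma io2_ne (y : Fin d ⊕ Fin 1) : io2 y ≠ .inr 0 := by
  rcases y with a | j <;> simp [io2]

lemma kap_inj1 {a b : Fin d ⊕ Fin 2} (ha : a ≠ .inr 1) (hb : b ≠ .inr 1)
    (h : kap a = kap b) : a = b := by
  have := congrArg io1 h
  rwa [io1_kap ha, io1_kap hb] at this

lemma kap_swap (z : Fin d ⊕ Fin 2) :
    kap (Equiv.swap (Sum.inr 0 : Fin d ⊕ Fin 2) (Sum.inr 1) z) = kap z := by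
  rcases z with a | j
  · rw [Equiv.swap_apply_of_ne_of_ne] <;> simp
  · fin_cases j
    · show kap (Equiv.swap (Sum.inr 0 : Fin d ⊕ Fin 2) (Sum.inr 1) (Sum.inr 0)) = kap (Sum.inr 0)
      rw [Equiv.swap_apply_left]; rfl
    · show kap (Equiv.swap (Sum.inr 0 : Fin d ⊕ Fin 2) (Sum.inr 1) (Sum.inr 1)) = kap (Sum.inr 1)
      rw [Equiv.swap_apply_right]; rfl

/-- Build a permutation of `Fin d ⊕ Fin 1` from one of `Fin d ⊕ Fin 2` fixing `inr 1`. -/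
def mk1 (g : Perm (Fin d ⊕ Fin 2)) (hg : g (.inr 1) = .inr 1) : Perm (Fin d ⊕ Fin 1) where
  toFun := fun y => kap (g (io1 y))
  invFun := fun y => kap (g.symm (io1 y))
  left_inv := by
    intro y
    have h1 : g (io1 y) ≠ .inr 1 := by
      intro h
      exact io1_ne y (g.injective (h.trans hg.symm))
    show kap (g.symm (io1 (kap (g (io1 y))))) = y
    rw [io1_kap h1, Equiv.symm_apply_apply, kap_io1]
  right_inv := by
    intro y
    have h1 : g.symm (io1 y) ≠ .inr 1 := by
      intro h
      apply io1_ne y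
      have := congrArg g h
      rwa [Equiv.apply_symm_apply, hg] at this
    show kap (g (io1 (kap (g.symm (io1 y))))) = y
    rw [io1_kap h1, Equiv.apply_symm_apply, kap_io1]

/-- Build a permutation of `Fin d ⊕ Fin 1` from one of `Fin d ⊕ Fin 2` fixing `inr 0`. -/
def mk2 (g : Perm (Fin d ⊕ Fin 2)) (hg : g (.inr 0) = .inr 0) : Perm (Fin d ⊕ Fin 1) where
  toFun := fun y => kap (g (io2 y))
  invFun := fun y => kap (g.symm (io2 y))
  left_inv := by
    intro y
    have h1 : g (io2 y) ≠ .inr 0 := by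
      intro h
      exact io2_ne y (g.injective (h.trans hg.symm))
    show kap (g.symm (io2 (kap (g (io2 y))))) = y
    rw [io2_kap h1, Equiv.symm_apply_apply, kap_io2]
  right_inv := by
    intro y
    have h1 : g.symm (io2 y) ≠ .inr 0 := by
      intro h
      apply io2_ne y
      have := congrArg g h
      rwa [Equiv.apply_symm_apply, hg] at this
    show kap (g (io2 (kap (g.symm (io2 y))))) = y
    rw [io2_kap h1, Equiv.apply_symm_apply, kap_io2]

lemma mk1_apply (g : Perm (Fin d ⊕ Fin 2)) (hg) (y) : mk1 g hg y = kap (g (io1 y)) := rfl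
lemma mk2_apply (g : Perm (Fin d ⊕ Fin 2)) (hg) (y) : mk2 g hg y = kap (g (io2 y)) := rfl

lemma mk1_injective {g g' : Perm (Fin d ⊕ Fin 2)} {hg hg'}
    (h : mk1 g hg = mk1 g' hg') : g = g' := by
  ext z
  by_cases hz : z = .inr 1
  · subst hz; rw [hg, hg']
  · have h2 : kap (g z) = kap (g' z) := by
      have := congrArg (fun e : Perm (Fin d ⊕ Fin 1) => e (kap z)) h
      simpa [mk1_apply, io1_kap hz] using this
    refine kap_inj1 ?_ ?_ h2
    · intro hh; exact hz (g.injective (hh.trans hg.symm))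
    · intro hh; exact hz (g'.injective (hh.trans hg'.symm))

lemma mk2_injective {g g' : Perm (Fin d ⊕ Fin 2)} {hg hg'}
    (h : mk2 g hg = mk2 g' hg') : g = g' := by
  ext z
  by_cases hz : z = .inr 0
  · subst hz; rw [hg, hg']
  · have h2 : kap (g z) = kap (g' z) := by
      have := congrArg (fun e : Perm (Fin d ⊕ Fin 1) => e (kap z)) h
      simpa [mk2_apply, io2_kap hz] using this
    have ha : g z ≠ .inr 0 := fun hh => hz (g.injective (hh.trans hg.symm))
    have hb : g' z ≠ .inr 0 := fun hh => hz (g'.injective (hh.trans hg'.symm))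
    have := congrArg io2 h2
    rwa [io2_kap ha, io2_kap hb] at this



/-- Multiplying by `swap x y` splits the cycle through `x` and `y`. -/
lemma not_sameCycle_swap_mul {X : Type*} [Fintype X] [DecidableEq X] (f : Perm X) {x y : X}
    (hxy : x ≠ y) (h : f.SameCycle x y) : ¬ (Equiv.swap x y * f).SameCycle y x := by
  set g := Equiv.swap x y * f with hg
  intro hc
  obtain ⟨m0, hm0⟩ := hc.exists_pow_eq'
  have hex : ∃ n, (g ^ n) y = x := ⟨m0, hm0.2⟩
  classical
  set n := Nat.find hex with hn
  have hnx : (g ^ n) y = x := Nat.find_spec hex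
  have hnpos : 0 < n := by
    rcases Nat.eq_zero_or_pos n with h0 | h0
    · exfalso; apply hxy; rw [h0] at hnx; simpa using hnx.symm
    · exact h0
  -- g^k y = f^k y for k < n
  have key : ∀ k, k < n → (g ^ k) y = (f ^ k) y := by
    intro k
    induction k with
    | zero => intro _; simp
    | succ k ih =>
      intro hk
      have hk' : k < n := Nat.lt_of_succ_lt hk
      have hval : (g ^ (k + 1)) y = Equiv.swap x y (f ((g ^ k) y)) := by
        rw [pow_succ', Perm.mul_apply, hg, Perm.mul_apply]
      have hne_x : (g ^ (k + 1)) y ≠ x := fun hh => absurd hh (Nat.find_min hex hk)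
      have hne_y : (g ^ (k + 1)) y ≠ y := by
        intro hh
        have heq : (g ^ n) y = (g ^ (n - (k + 1))) y := by
          conv_lhs => rw [show n = (n - (k+1)) + (k+1) by omega]
          rw [pow_add, Perm.mul_apply, hh]
        have hlt : n - (k + 1) < n := by omega
        exact Nat.find_min hex hlt (heq ▸ hnx)
      have hfx : f ((g ^ k) y) ≠ x := by
        intro hh; apply hne_y; rw [hval, hh, Equiv.swap_apply_left]
      have hfy : f ((g ^ k) y) ≠ y := by
        intro hh; apply hne_x; rw [hval, hh, Equiv.swap_apply_right]
      rw [hval, Equiv.swap_apply_of_ne_of_ne hfx hfy, ih hk', ← Perm.mul_apply, ← pow_succ']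
  -- f has period n on y
  have hper : (f ^ n) y = y := by
    have h1 : (g ^ n) y = Equiv.swap x y (f ((g ^ (n-1)) y)) := by
      conv_lhs => rw [show n = (n-1) + 1 by omega]
      rw [pow_succ', Perm.mul_apply, hg, Perm.mul_apply]
    have h2 : Equiv.swap x y (f ((g ^ (n-1)) y)) = x := h1 ▸ hnx
    have h3 : f ((g ^ (n-1)) y) = y := by
      have := congrArg (Equiv.swap x y) h2
      rwa [Equiv.swap_apply_self, Equiv.swap_apply_left] at this
    have h4 : (g ^ (n-1)) y = (f ^ (n-1)) y := key _ (by omega)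
    calc (f ^ n) y = f ((f ^ (n-1)) y) := by
          conv_lhs => rw [show n = (n-1) + 1 by omega]
          rw [pow_succ', Perm.mul_apply]
      _ = y := by rw [← h4, h3]
  have hperq : ∀ q, (f ^ (n * q)) y = y := by
    intro q
    induction q with
    | zero => simp
    | succ q ih => rw [Nat.mul_succ, pow_add, Perm.mul_apply, hper, ih]
  obtain ⟨m, hm⟩ := (h.symm).exists_pow_eq'
  have hmx : (f ^ m) y = x := hm.2
  have hsplit : (f ^ m) y = (f ^ (m % n)) y := by
    conv_lhs => rw [show m = m % n + n * (m / n) by rw [Nat.mod_add_div]]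
    rw [pow_add, Perm.mul_apply, hperq]
  have hlt : m % n < n := Nat.mod_lt _ hnpos
  have : (g ^ (m % n)) y = x := by rw [key _ hlt, ← hsplit, hmx]
  rcases Nat.eq_zero_or_pos (m % n) with h0 | h0
  · rw [h0] at this; simp at this; exact hxy this.symm
  · exact Nat.find_min hex hlt this


open scoped Classical


noncomputable section

def extP (τ : Perm (Fin d)) : Perm (Fin d ⊕ Fin 2) := Equiv.sumCongr τ (Equiv.refl (Fin 2))

def rho (σ : Perm (Fin d ⊕ Fin 2)) (τ : Perm (Fin d)) : Perm (Fin d ⊕ Fin 2) := σ * (extP τ)⁻¹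

def tB (σ : Perm (Fin d ⊕ Fin 2)) (τ : Perm (Fin d)) : Prop :=
  (rho σ τ).SameCycle (.inr 0) (.inr 1)

def rhoh (σ : Perm (Fin d ⊕ Fin 2)) (τ : Perm (Fin d)) : Perm (Fin d ⊕ Fin 2) :=
  if tB σ τ then Equiv.swap (.inr 0) (.inr 1) * rho σ τ else rho σ τ

def Bp (σ : Perm (Fin d ⊕ Fin 2)) (τ : Perm (Fin d)) : Perm (Fin d ⊕ Fin 2) :=
  (rhoh σ τ).cycleOf (.inr 1)

def Ap (σ : Perm (Fin d ⊕ Fin 2)) (τ : Perm (Fin d)) : Perm (Fin d ⊕ Fin 2) :=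
  (Bp σ τ)⁻¹ * rhoh σ τ

variable (σ : Perm (Fin d ⊕ Fin 2)) (τ : Perm (Fin d))

lemma extP_inl (r : Fin d) : extP τ (.inl r) = .inl (τ r) := rfl
lemma extP_inr (j : Fin 2) : extP τ (.inr j) = .inr j := rfl

lemma rho_inl (r : Fin d) : rho σ τ (.inl (τ r)) = σ (.inl r) := by
  simp [rho, extP, Perm.mul_apply]

lemma rho_inr (j : Fin 2) : rho σ τ (.inr j) = σ (.inr j) := by
  simp [rho, extP, Perm.mul_apply]

lemma kap_rhoh (z : Fin d ⊕ Fin 2) : kap (rhoh σ τ z) = kap (rho σ τ z) := by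
  unfold rhoh
  split
  · rw [Perm.mul_apply, kap_swap]
  · rfl

lemma not_sc : ¬ (rhoh σ τ).SameCycle (.inr 1) (.inr 0) := by
  unfold rhoh
  split_ifs with h
  · exact not_sameCycle_swap_mul (rho σ τ) (by simp) h
  · exact fun hc => h hc.symm

lemma Bp_sc {z : Fin d ⊕ Fin 2} (h : (rhoh σ τ).SameCycle (.inr 1) z) :
    Bp σ τ z = rhoh σ τ z := h.cycleOf_apply

lemma Bp_nsc {z : Fin d ⊕ Fin 2} (h : ¬ (rhoh σ τ).SameCycle (.inr 1) z) :
    Bp σ τ z = z := cycleOf_apply_of_not_sameCycle h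

lemma Ap_sc {z : Fin d ⊕ Fin 2} (h : (rhoh σ τ).SameCycle (.inr 1) z) :
    Ap σ τ z = z := by
  unfold Ap
  rw [Perm.mul_apply, ← Bp_sc σ τ h, Perm.inv_eq_iff_eq]

lemma Ap_nsc {z : Fin d ⊕ Fin 2} (h : ¬ (rhoh σ τ).SameCycle (.inr 1) z) :
    Ap σ τ z = rhoh σ τ z := by
  unfold Ap
  rw [Perm.mul_apply]
  have h2 : ¬ (rhoh σ τ).SameCycle (.inr 1) (rhoh σ τ z) := by
    rwa [sameCycle_apply_right]
  rw [Perm.inv_eq_iff_eq, Bp_nsc σ τ h2]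

lemma Bp_inr0 : Bp σ τ (.inr 0) = .inr 0 := Bp_nsc σ τ (not_sc σ τ)

lemma Ap_inr1 : Ap σ τ (.inr 1) = .inr 1 := Ap_sc σ τ (SameCycle.refl _ _)

lemma hF : (Ap σ τ * extP τ) (.inr 1) = .inr 1 := by
  rw [Perm.mul_apply, extP_inr, Ap_inr1]

lemma hG : (Bp σ τ * extP τ) (.inr 0) = .inr 0 := by
  rw [Perm.mul_apply, extP_inr, Bp_inr0]

def alpha : Perm (Fin d ⊕ Fin 1) := mk1 (Ap σ τ * extP τ) (hF σ τ)
def beta : Perm (Fin d ⊕ Fin 1) := mk2 (Bp σ τ * extP τ) (hG σ τ)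

def Phi (p : Perm (Fin d ⊕ Fin 2) × Perm (Fin d)) :
    (Perm (Fin d ⊕ Fin 1) × Perm (Fin d ⊕ Fin 1)) ⊕
      (Perm (Fin d ⊕ Fin 1) × Perm (Fin d ⊕ Fin 1)) :=
  if tB p.1 p.2 then .inr (alpha p.1 p.2, beta p.1 p.2) else .inl (alpha p.1 p.2, beta p.1 p.2)

lemma cancelFG : (Bp σ τ * extP τ) * (Ap σ τ * extP τ)⁻¹ = Bp σ τ * (Ap σ τ)⁻¹ := by
  group

lemma Kcyc : (Bp σ τ * (Ap σ τ)⁻¹).cycleOf (.inr 1) = Bp σ τ := by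
  have hdisj : (Bp σ τ).Disjoint (Ap σ τ)⁻¹ := by
    intro z
    by_cases h : (rhoh σ τ).SameCycle (.inr 1) z
    · right; rw [Perm.inv_eq_iff_eq]; exact (Ap_sc σ τ h).symm
    · left; exact Bp_nsc σ τ h
  rw [hdisj.cycleOf_mul_distrib]
  have h2 : ((Ap σ τ)⁻¹).cycleOf (.inr 1) = 1 := by
    rw [cycleOf_eq_one_iff, Perm.inv_eq_iff_eq]
    exact (Ap_inr1 σ τ).symm
  rw [h2, mul_one]
  by_cases hfix : rhoh σ τ (.inr 1) = .inr 1
  · have hBp1 : Bp σ τ = 1 := (cycleOf_eq_one_iff _).mpr hfix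
    rw [hBp1]; exact cycleOf_one _
  · have hc : (Bp σ τ).IsCycle := isCycle_cycleOf _ hfix
    have h1 : Bp σ τ (.inr 1) ≠ .inr 1 := by
      rw [Bp_sc σ τ (SameCycle.refl _ _)]; exact hfix
    exact hc.cycleOf_eq h1

lemma recover {σ' : Perm (Fin d ⊕ Fin 2)} {τ' : Perm (Fin d)}
    (hFeq : Ap σ τ * extP τ = Ap σ' τ' * extP τ')
    (hGeq : Bp σ τ * extP τ = Bp σ' τ' * extP τ')
    (htype : tB σ τ ↔ tB σ' τ') : σ = σ' ∧ τ = τ' := by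
  have hK : Bp σ τ * (Ap σ τ)⁻¹ = Bp σ' τ' * (Ap σ' τ')⁻¹ := by
    rw [← cancelFG, ← cancelFG, hFeq, hGeq]
  have hBp : Bp σ τ = Bp σ' τ' := by rw [← Kcyc σ τ, ← Kcyc σ' τ', hK]
  have hAp : Ap σ τ = Ap σ' τ' := by
    have := hK
    rw [hBp] at this
    exact inv_injective (mul_left_cancel this)
  have hext : extP τ = extP τ' := by
    have := hFeq
    rw [hAp] at this
    exact mul_left_cancel this
  have hτ : τ = τ' := by
    ext r
    have := congrArg (fun e : Perm (Fin d ⊕ Fin 2) => e (.inl r)) hext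
    simp only [extP_inl] at this
    exact congrArg Fin.val (Sum.inl.inj this)
  have hrhoh : rhoh σ τ = rhoh σ' τ' := by
    have h1 : (Bp σ τ)⁻¹ * rhoh σ τ = (Bp σ' τ')⁻¹ * rhoh σ' τ' := hAp
    rw [hBp] at h1
    exact mul_left_cancel h1
  have hrho : rho σ τ = rho σ' τ' := by
    by_cases h : tB σ τ
    · have h' : tB σ' τ' := htype.mp h
      have := hrhoh
      rw [rhoh, rhoh, if_pos h, if_pos h'] at this
      exact mul_left_cancel this
    · have h' : ¬ tB σ' τ' := fun hh => h (htype.mpr hh)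
      rwa [rhoh, rhoh, if_neg h, if_neg h'] at hrhoh
  have hσ : σ = σ' := by
    have h1 : rho σ τ * extP τ = rho σ' τ' * extP τ' := by rw [hrho, hext]
    rw [rho, rho] at h1
    group at h1
    exact h1
  exact ⟨hσ, hτ⟩

lemma Phi_injective : Function.Injective (Phi (d := d)) := by
  rintro ⟨σ, τ⟩ ⟨σ', τ'⟩ h
  unfold Phi at h
  by_cases h1 : tB σ τ <;> by_cases h2 : tB σ' τ' <;>
    simp only [h1, h2, if_true, if_false, reduceIte] at h
  · have h' := Sum.inr.inj h
    have ha : alpha σ τ = alpha σ' τ' := congrArg Prod.fst h'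
    have hb : beta σ τ = beta σ' τ' := congrArg Prod.snd h'
    obtain ⟨hσ, hτ⟩ := recover σ τ (mk1_injective ha) (mk2_injective hb) (by tauto)
    simp [hσ, hτ]
  · simp at h
  · simp at h
  · have h' := Sum.inl.inj h
    have ha : alpha σ τ = alpha σ' τ' := congrArg Prod.fst h'
    have hb : beta σ τ = beta σ' τ' := congrArg Prod.snd h'
    obtain ⟨hσ, hτ⟩ := recover σ τ (mk1_injective ha) (mk2_injective hb) (by tauto)
    simp [hσ, hτ]

section Weights

variable (σ : Perm (Fin d ⊕ Fin 2)) (τ : Perm (Fin d))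

lemma kap_inl (a : Fin d) : kap (Sum.inl a : Fin d ⊕ Fin 2) = .inl a := rfl
lemma kap_inr (j : Fin 2) : kap (Sum.inr j : Fin d ⊕ Fin 2) = .inr 0 := rfl

lemma alpha_inl (r : Fin d) : alpha σ τ (.inl r) = kap (Ap σ τ (.inl (τ r))) := rfl

lemma alpha_inr (j : Fin 1) : alpha σ τ (.inr j) = kap (σ (.inr 0)) := by
  show kap ((Ap σ τ * extP τ) (io1 (.inr j))) = _
  rw [show io1 (.inr j : Fin d ⊕ Fin 1) = .inr 0 from rfl, Perm.mul_apply, extP_inr,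
    Ap_nsc σ τ (not_sc σ τ), kap_rhoh, rho_inr]

lemma beta_inl (r : Fin d) : beta σ τ (.inl r) = kap (Bp σ τ (.inl (τ r))) := rfl

lemma beta_inr (j : Fin 1) : beta σ τ (.inr j) = kap (σ (.inr 1)) := by
  show kap ((Bp σ τ * extP τ) (io2 (.inr j))) = _
  rw [show io2 (.inr j : Fin d ⊕ Fin 1) = .inr 1 from rfl, Perm.mul_apply, extP_inr,
    Bp_sc σ τ (SameCycle.refl _ _), kap_rhoh, rho_inr]

lemma no_hit0 {z : Fin d ⊕ Fin 2} (hsc : (rhoh σ τ).SameCycle (.inr 1) z)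
    (h : rhoh σ τ z = .inr 0) : False :=
  not_sc σ τ (hsc.trans ⟨1, by simpa using h⟩)

lemma hit1_sc {z : Fin d ⊕ Fin 2} (h : rhoh σ τ z = .inr 1) :
    (rhoh σ τ).SameCycle (.inr 1) z :=
  SameCycle.symm ⟨1, by simpa using h⟩

lemma tB_fix0 (htB : tB σ τ) (h : rho σ τ (.inr 0) = .inr 0) : False := by
  obtain ⟨n, hn⟩ := htB
  rw [zpow_apply_eq_self_of_apply_eq_self h] at hn
  exact absurd hn (by simp)

lemma tB_fix1 (htB : tB σ τ) (h : rho σ τ (.inr 1) = .inr 1) : False := by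
  obtain ⟨n, hn⟩ := htB.symm
  rw [zpow_apply_eq_self_of_apply_eq_self h] at hn
  exact absurd hn (by simp)

lemma ntB_01 (h : ¬ tB σ τ) (he : rho σ τ (.inr 0) = .inr 1) : False :=
  h ⟨1, by simpa using he⟩

lemma ntB_10 (h : ¬ tB σ τ) (he : rho σ τ (.inr 1) = .inr 0) : False :=
  h (SameCycle.symm ⟨1, by simpa using he⟩)

lemma rhoh_pos (htB : tB σ τ) (z : Fin d ⊕ Fin 2) :
    rhoh σ τ z = Equiv.swap (.inr 0) (.inr 1) (rho σ τ z) := by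
  rw [rhoh, if_pos htB, Perm.mul_apply]

lemma rhoh_neg (h : ¬ tB σ τ) (z : Fin d ⊕ Fin 2) : rhoh σ τ z = rho σ τ z := by
  rw [rhoh, if_neg h]

variable (BM : Matrix (Fin d) (Fin d) ℝ) (x₁ x₂ y₁ y₂ : Fin d → ℝ) (w₁₁ w₁₂ w₂₁ w₂₂ : ℝ)

lemma blk1_ll (x y : Fin d → ℝ) (w : ℝ) (r c : Fin d) :
    blk1 BM x y w (.inl r) (.inl c) = BM r c := rfl
lemma blk1_lr (x y : Fin d → ℝ) (w : ℝ) (r : Fin d) (j : Fin 1) :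
    blk1 BM x y w (.inl r) (.inr j) = y r := rfl
lemma blk1_rl (x y : Fin d → ℝ) (w : ℝ) (j : Fin 1) (c : Fin d) :
    blk1 BM x y w (.inr j) (.inl c) = x c := rfl
lemma blk1_rr (x y : Fin d → ℝ) (w : ℝ) (i j : Fin 1) :
    blk1 BM x y w (.inr i) (.inr j) = w := rfl

lemma blk2_ll (r c : Fin d) : blk2 BM x₁ x₂ y₁ y₂ w₁₁ w₁₂ w₂₁ w₂₂ (.inl r) (.inl c) = BM r c := rfl
lemma blk2_lr0 (r : Fin d) : blk2 BM x₁ x₂ y₁ y₂ w₁₁ w₁₂ w₂₁ w₂₂ (.inl r) (.inr 0) = y₁ r := by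
  show (if (0 : Fin 2) = 0 then y₁ r else y₂ r) = y₁ r; simp
lemma blk2_lr1 (r : Fin d) : blk2 BM x₁ x₂ y₁ y₂ w₁₁ w₁₂ w₂₁ w₂₂ (.inl r) (.inr 1) = y₂ r := by
  show (if (1 : Fin 2) = 0 then y₁ r else y₂ r) = y₂ r; simp
lemma blk2_rl0 (c : Fin d) : blk2 BM x₁ x₂ y₁ y₂ w₁₁ w₁₂ w₂₁ w₂₂ (.inr 0) (.inl c) = x₁ c := by
  show (if (0 : Fin 2) = 0 then x₁ c else x₂ c) = x₁ c; simp
lemma blk2_rl1 (c : Fin d) : blk2 BM x₁ x₂ y₁ y₂ w₁₁ w₁₂ w₂₁ w₂₂ (.inr 1) (.inl c) = x₂ c := by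
  show (if (1 : Fin 2) = 0 then x₁ c else x₂ c) = x₂ c; simp
lemma blk2_rr00 : blk2 BM x₁ x₂ y₁ y₂ w₁₁ w₁₂ w₂₁ w₂₂ (.inr 0) (.inr 0) = w₁₁ := by
  show !![w₁₁, w₁₂; w₂₁, w₂₂] 0 0 = w₁₁; simp
lemma blk2_rr01 : blk2 BM x₁ x₂ y₁ y₂ w₁₁ w₁₂ w₂₁ w₂₂ (.inr 0) (.inr 1) = w₁₂ := by
  show !![w₁₁, w₁₂; w₂₁, w₂₂] 0 1 = w₁₂; simp
lemma blk2_rr10 : blk2 BM x₁ x₂ y₁ y₂ w₁₁ w₁₂ w₂₁ w₂₂ (.inr 1) (.inr 0) = w₂₁ := by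
  show !![w₁₁, w₁₂; w₂₁, w₂₂] 1 0 = w₂₁; simp
lemma blk2_rr11 : blk2 BM x₁ x₂ y₁ y₂ w₁₁ w₁₂ w₂₁ w₂₂ (.inr 1) (.inr 1) = w₂₂ := by
  show !![w₁₁, w₁₂; w₂₁, w₂₂] 1 1 = w₂₂; simp

/-- Row factor identity, type A (`¬ tB`). -/
lemma row_neg (hn : ¬ tB σ τ) (r : Fin d) :
    blk1 BM x₁ y₁ w₁₁ (.inl r) (alpha σ τ (.inl r)) *
      blk1 BM x₂ y₂ w₂₂ (.inl r) (beta σ τ (.inl r)) =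
    blk2 BM x₁ x₂ y₁ y₂ w₁₁ w₁₂ w₂₁ w₂₂ (.inl r) (σ (.inl r)) * BM r (τ r) := by
  by_cases hs : (rhoh σ τ).SameCycle (.inr 1) (.inl (τ r))
  · rw [alpha_inl, Ap_sc σ τ hs, beta_inl, Bp_sc σ τ hs, kap_rhoh, rho_inl]
    rcases e : σ (.inl r) with c | j
    · first | (simp only [kap_inl, kap_inr, blk1_ll, blk1_lr, blk1_rl, blk1_rr, blk2_ll, blk2_lr0, blk2_lr1, blk2_rl0, blk2_rl1, blk2_rr00, blk2_rr01, blk2_rr10, blk2_rr11, Fin.mk_zero, Fin.mk_one]; ring) | (simp only [kap_inl, kap_inr, blk1_ll, blk1_lr, blk1_rl, blk1_rr, blk2_ll, blk2_lr0, blk2_lr1, blk2_rl0, blk2_rl1, blk2_rr00, blk2_rr01, blk2_rr10, blk2_rr11, Fin.mk_zero, Fin.mk_one]) | ring | rfl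
    · have hval : rhoh σ τ (.inl (τ r)) = .inr j := by rw [rhoh_neg σ τ hn, rho_inl, e]
      fin_cases j
      · simp only [Fin.mk_zero, Fin.mk_one] at hval
        exact absurd hval (fun hh => no_hit0 σ τ hs hh)
      · first | (simp only [kap_inl, kap_inr, blk1_ll, blk1_lr, blk1_rl, blk1_rr, blk2_ll, blk2_lr0, blk2_lr1, blk2_rl0, blk2_rl1, blk2_rr00, blk2_rr01, blk2_rr10, blk2_rr11, Fin.mk_zero, Fin.mk_one]; ring) | (simp only [kap_inl, kap_inr, blk1_ll, blk1_lr, blk1_rl, blk1_rr, blk2_ll, blk2_lr0, blk2_lr1, blk2_rl0, blk2_rl1, blk2_rr00, blk2_rr01, blk2_rr10, blk2_rr11, Fin.mk_zero, Fin.mk_one]) | ring | rfl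
  · rw [alpha_inl, Ap_nsc σ τ hs, kap_rhoh, rho_inl, beta_inl, Bp_nsc σ τ hs]
    rcases e : σ (.inl r) with c | j
    · first | (simp only [kap_inl, kap_inr, blk1_ll, blk1_lr, blk1_rl, blk1_rr, blk2_ll, blk2_lr0, blk2_lr1, blk2_rl0, blk2_rl1, blk2_rr00, blk2_rr01, blk2_rr10, blk2_rr11, Fin.mk_zero, Fin.mk_one]; ring) | (simp only [kap_inl, kap_inr, blk1_ll, blk1_lr, blk1_rl, blk1_rr, blk2_ll, blk2_lr0, blk2_lr1, blk2_rl0, blk2_rl1, blk2_rr00, blk2_rr01, blk2_rr10, blk2_rr11, Fin.mk_zero, Fin.mk_one]) | ring | rfl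
    · have hval : rhoh σ τ (.inl (τ r)) = .inr j := by rw [rhoh_neg σ τ hn, rho_inl, e]
      fin_cases j
      · first | (simp only [kap_inl, kap_inr, blk1_ll, blk1_lr, blk1_rl, blk1_rr, blk2_ll, blk2_lr0, blk2_lr1, blk2_rl0, blk2_rl1, blk2_rr00, blk2_rr01, blk2_rr10, blk2_rr11, Fin.mk_zero, Fin.mk_one]; ring) | (simp only [kap_inl, kap_inr, blk1_ll, blk1_lr, blk1_rl, blk1_rr, blk2_ll, blk2_lr0, blk2_lr1, blk2_rl0, blk2_rl1, blk2_rr00, blk2_rr01, blk2_rr10, blk2_rr11, Fin.mk_zero, Fin.mk_one]) | ring | rfl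
      · simp only [Fin.mk_zero, Fin.mk_one] at hval
        exact absurd (hit1_sc σ τ hval) hs

/-- Row factor identity, type B (`tB`). -/
lemma row_pos (hp : tB σ τ) (r : Fin d) :
    blk1 BM x₁ y₂ w₁₂ (.inl r) (alpha σ τ (.inl r)) *
      blk1 BM x₂ y₁ w₂₁ (.inl r) (beta σ τ (.inl r)) =
    blk2 BM x₁ x₂ y₁ y₂ w₁₁ w₁₂ w₂₁ w₂₂ (.inl r) (σ (.inl r)) * BM r (τ r) := by
  by_cases hs : (rhoh σ τ).SameCycle (.inr 1) (.inl (τ r))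
  · rw [alpha_inl, Ap_sc σ τ hs, beta_inl, Bp_sc σ τ hs, kap_rhoh, rho_inl]
    rcases e : σ (.inl r) with c | j
    · first | (simp only [kap_inl, kap_inr, blk1_ll, blk1_lr, blk1_rl, blk1_rr, blk2_ll, blk2_lr0, blk2_lr1, blk2_rl0, blk2_rl1, blk2_rr00, blk2_rr01, blk2_rr10, blk2_rr11, Fin.mk_zero, Fin.mk_one]; ring) | (simp only [kap_inl, kap_inr, blk1_ll, blk1_lr, blk1_rl, blk1_rr, blk2_ll, blk2_lr0, blk2_lr1, blk2_rl0, blk2_rl1, blk2_rr00, blk2_rr01, blk2_rr10, blk2_rr11, Fin.mk_zero, Fin.mk_one]) | ring | rfl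
    · have hval : rhoh σ τ (.inl (τ r)) = Equiv.swap (.inr 0) (.inr 1) (.inr j) := by
        rw [rhoh_pos σ τ hp, rho_inl, e]
      fin_cases j
      · simp only [Fin.mk_zero, Fin.mk_one] at hval
        rw [Equiv.swap_apply_left] at hval
        first | (simp only [kap_inl, kap_inr, blk1_ll, blk1_lr, blk1_rl, blk1_rr, blk2_ll, blk2_lr0, blk2_lr1, blk2_rl0, blk2_rl1, blk2_rr00, blk2_rr01, blk2_rr10, blk2_rr11, Fin.mk_zero, Fin.mk_one]; ring) | (simp only [kap_inl, kap_inr, blk1_ll, blk1_lr, blk1_rl, blk1_rr, blk2_ll, blk2_lr0, blk2_lr1, blk2_rl0, blk2_rl1, blk2_rr00, blk2_rr01, blk2_rr10, blk2_rr11, Fin.mk_zero, Fin.mk_one]) | ring | rfl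
      · simp only [Fin.mk_zero, Fin.mk_one] at hval
        rw [Equiv.swap_apply_right] at hval
        try simp only [Fin.mk_zero, Fin.mk_one] at hval
        exact absurd hval (fun hh => no_hit0 σ τ hs hh)
  · rw [alpha_inl, Ap_nsc σ τ hs, kap_rhoh, rho_inl, beta_inl, Bp_nsc σ τ hs]
    rcases e : σ (.inl r) with c | j
    · first | (simp only [kap_inl, kap_inr, blk1_ll, blk1_lr, blk1_rl, blk1_rr, blk2_ll, blk2_lr0, blk2_lr1, blk2_rl0, blk2_rl1, blk2_rr00, blk2_rr01, blk2_rr10, blk2_rr11, Fin.mk_zero, Fin.mk_one]; ring) | (simp only [kap_inl, kap_inr, blk1_ll, blk1_lr, blk1_rl, blk1_rr, blk2_ll, blk2_lr0, blk2_lr1, blk2_rl0, blk2_rl1, blk2_rr00, blk2_rr01, blk2_rr10, blk2_rr11, Fin.mk_zero, Fin.mk_one]) | ring | rfl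
    · have hval : rhoh σ τ (.inl (τ r)) = Equiv.swap (.inr 0) (.inr 1) (.inr j) := by
        rw [rhoh_pos σ τ hp, rho_inl, e]
      fin_cases j
      · simp only [Fin.mk_zero, Fin.mk_one] at hval
        rw [Equiv.swap_apply_left] at hval
        try simp only [Fin.mk_zero, Fin.mk_one] at hval
        exact absurd (hit1_sc σ τ hval) hs
      · simp only [Fin.mk_zero, Fin.mk_one] at hval
        rw [Equiv.swap_apply_right] at hval
        first | (simp only [kap_inl, kap_inr, blk1_ll, blk1_lr, blk1_rl, blk1_rr, blk2_ll, blk2_lr0, blk2_lr1, blk2_rl0, blk2_rl1, blk2_rr00, blk2_rr01, blk2_rr10, blk2_rr11, Fin.mk_zero, Fin.mk_one]; ring) | (simp only [kap_inl, kap_inr, blk1_ll, blk1_lr, blk1_rl, blk1_rr, blk2_ll, blk2_lr0, blk2_lr1, blk2_rl0, blk2_rl1, blk2_rr00, blk2_rr01, blk2_rr10, blk2_rr11, Fin.mk_zero, Fin.mk_one]) | ring | rfl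

/-- Special rows identity, type A. -/
lemma special_neg (hn : ¬ tB σ τ) :
    blk1 BM x₁ y₁ w₁₁ (.inr 0) (alpha σ τ (.inr 0)) *
      blk1 BM x₂ y₂ w₂₂ (.inr 0) (beta σ τ (.inr 0)) =
    blk2 BM x₁ x₂ y₁ y₂ w₁₁ w₁₂ w₂₁ w₂₂ (.inr 0) (σ (.inr 0)) *
      blk2 BM x₁ x₂ y₁ y₂ w₁₁ w₁₂ w₂₁ w₂₂ (.inr 1) (σ (.inr 1)) := by
  rw [alpha_inr, beta_inr]
  have e₁ : blk1 BM x₁ y₁ w₁₁ (.inr 0) (kap (σ (.inr 0))) =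
      blk2 BM x₁ x₂ y₁ y₂ w₁₁ w₁₂ w₂₁ w₂₂ (.inr 0) (σ (.inr 0)) := by
    rcases e : σ (.inr 0) with c | j
    · first | (simp only [kap_inl, kap_inr, blk1_ll, blk1_lr, blk1_rl, blk1_rr, blk2_ll, blk2_lr0, blk2_lr1, blk2_rl0, blk2_rl1, blk2_rr00, blk2_rr01, blk2_rr10, blk2_rr11, Fin.mk_zero, Fin.mk_one]; ring) | (simp only [kap_inl, kap_inr, blk1_ll, blk1_lr, blk1_rl, blk1_rr, blk2_ll, blk2_lr0, blk2_lr1, blk2_rl0, blk2_rl1, blk2_rr00, blk2_rr01, blk2_rr10, blk2_rr11, Fin.mk_zero, Fin.mk_one]) | ring | rfl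
    · have hval : rho σ τ (.inr 0) = .inr j := by rw [rho_inr, e]
      fin_cases j
      · first | (simp only [kap_inl, kap_inr, blk1_ll, blk1_lr, blk1_rl, blk1_rr, blk2_ll, blk2_lr0, blk2_lr1, blk2_rl0, blk2_rl1, blk2_rr00, blk2_rr01, blk2_rr10, blk2_rr11, Fin.mk_zero, Fin.mk_one]; ring) | (simp only [kap_inl, kap_inr, blk1_ll, blk1_lr, blk1_rl, blk1_rr, blk2_ll, blk2_lr0, blk2_lr1, blk2_rl0, blk2_rl1, blk2_rr00, blk2_rr01, blk2_rr10, blk2_rr11, Fin.mk_zero, Fin.mk_one]) | ring | rfl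
      · simp only [Fin.mk_zero, Fin.mk_one] at hval
        exact absurd hval (fun hh => ntB_01 σ τ hn hh)
  have e₂ : blk1 BM x₂ y₂ w₂₂ (.inr 0) (kap (σ (.inr 1))) =
      blk2 BM x₁ x₂ y₁ y₂ w₁₁ w₁₂ w₂₁ w₂₂ (.inr 1) (σ (.inr 1)) := by
    rcases e : σ (.inr 1) with c | j
    · first | (simp only [kap_inl, kap_inr, blk1_ll, blk1_lr, blk1_rl, blk1_rr, blk2_ll, blk2_lr0, blk2_lr1, blk2_rl0, blk2_rl1, blk2_rr00, blk2_rr01, blk2_rr10, blk2_rr11, Fin.mk_zero, Fin.mk_one]; ring) | (simp only [kap_inl, kap_inr, blk1_ll, blk1_lr, blk1_rl, blk1_rr, blk2_ll, blk2_lr0, blk2_lr1, blk2_rl0, blk2_rl1, blk2_rr00, blk2_rr01, blk2_rr10, blk2_rr11, Fin.mk_zero, Fin.mk_one]) | ring | rfl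
    · have hval : rho σ τ (.inr 1) = .inr j := by rw [rho_inr, e]
      fin_cases j
      · simp only [Fin.mk_zero, Fin.mk_one] at hval
        exact absurd hval (fun hh => ntB_10 σ τ hn hh)
      · first | (simp only [kap_inl, kap_inr, blk1_ll, blk1_lr, blk1_rl, blk1_rr, blk2_ll, blk2_lr0, blk2_lr1, blk2_rl0, blk2_rl1, blk2_rr00, blk2_rr01, blk2_rr10, blk2_rr11, Fin.mk_zero, Fin.mk_one]; ring) | (simp only [kap_inl, kap_inr, blk1_ll, blk1_lr, blk1_rl, blk1_rr, blk2_ll, blk2_lr0, blk2_lr1, blk2_rl0, blk2_rl1, blk2_rr00, blk2_rr01, blk2_rr10, blk2_rr11, Fin.mk_zero, Fin.mk_one]) | ring | rfl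
  rw [e₁, e₂]

/-- Special rows identity, type B. -/
lemma special_pos (hp : tB σ τ) :
    blk1 BM x₁ y₂ w₁₂ (.inr 0) (alpha σ τ (.inr 0)) *
      blk1 BM x₂ y₁ w₂₁ (.inr 0) (beta σ τ (.inr 0)) =
    blk2 BM x₁ x₂ y₁ y₂ w₁₁ w₁₂ w₂₁ w₂₂ (.inr 0) (σ (.inr 0)) *
      blk2 BM x₁ x₂ y₁ y₂ w₁₁ w₁₂ w₂₁ w₂₂ (.inr 1) (σ (.inr 1)) := by
  rw [alpha_inr, beta_inr]
  have e₁ : blk1 BM x₁ y₂ w₁₂ (.inr 0) (kap (σ (.inr 0))) =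
      blk2 BM x₁ x₂ y₁ y₂ w₁₁ w₁₂ w₂₁ w₂₂ (.inr 0) (σ (.inr 0)) := by
    rcases e : σ (.inr 0) with c | j
    · first | (simp only [kap_inl, kap_inr, blk1_ll, blk1_lr, blk1_rl, blk1_rr, blk2_ll, blk2_lr0, blk2_lr1, blk2_rl0, blk2_rl1, blk2_rr00, blk2_rr01, blk2_rr10, blk2_rr11, Fin.mk_zero, Fin.mk_one]; ring) | (simp only [kap_inl, kap_inr, blk1_ll, blk1_lr, blk1_rl, blk1_rr, blk2_ll, blk2_lr0, blk2_lr1, blk2_rl0, blk2_rl1, blk2_rr00, blk2_rr01, blk2_rr10, blk2_rr11, Fin.mk_zero, Fin.mk_one]) | ring | rfl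
    · have hval : rho σ τ (.inr 0) = .inr j := by rw [rho_inr, e]
      fin_cases j
      · simp only [Fin.mk_zero, Fin.mk_one] at hval
        exact absurd hval (fun hh => tB_fix0 σ τ hp hh)
      · first | (simp only [kap_inl, kap_inr, blk1_ll, blk1_lr, blk1_rl, blk1_rr, blk2_ll, blk2_lr0, blk2_lr1, blk2_rl0, blk2_rl1, blk2_rr00, blk2_rr01, blk2_rr10, blk2_rr11, Fin.mk_zero, Fin.mk_one]; ring) | (simp only [kap_inl, kap_inr, blk1_ll, blk1_lr, blk1_rl, blk1_rr, blk2_ll, blk2_lr0, blk2_lr1, blk2_rl0, blk2_rl1, blk2_rr00, blk2_rr01, blk2_rr10, blk2_rr11, Fin.mk_zero, Fin.mk_one]) | ring | rfl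
  have e₂ : blk1 BM x₂ y₁ w₂₁ (.inr 0) (kap (σ (.inr 1))) =
      blk2 BM x₁ x₂ y₁ y₂ w₁₁ w₁₂ w₂₁ w₂₂ (.inr 1) (σ (.inr 1)) := by
    rcases e : σ (.inr 1) with c | j
    · first | (simp only [kap_inl, kap_inr, blk1_ll, blk1_lr, blk1_rl, blk1_rr, blk2_ll, blk2_lr0, blk2_lr1, blk2_rl0, blk2_rl1, blk2_rr00, blk2_rr01, blk2_rr10, blk2_rr11, Fin.mk_zero, Fin.mk_one]; ring) | (simp only [kap_inl, kap_inr, blk1_ll, blk1_lr, blk1_rl, blk1_rr, blk2_ll, blk2_lr0, blk2_lr1, blk2_rl0, blk2_rl1, blk2_rr00, blk2_rr01, blk2_rr10, blk2_rr11, Fin.mk_zero, Fin.mk_one]) | ring | rfl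
    · have hval : rho σ τ (.inr 1) = .inr j := by rw [rho_inr, e]
      fin_cases j
      · first | (simp only [kap_inl, kap_inr, blk1_ll, blk1_lr, blk1_rl, blk1_rr, blk2_ll, blk2_lr0, blk2_lr1, blk2_rl0, blk2_rl1, blk2_rr00, blk2_rr01, blk2_rr10, blk2_rr11, Fin.mk_zero, Fin.mk_one]; ring) | (simp only [kap_inl, kap_inr, blk1_ll, blk1_lr, blk1_rl, blk1_rr, blk2_ll, blk2_lr0, blk2_lr1, blk2_rl0, blk2_rl1, blk2_rr00, blk2_rr01, blk2_rr10, blk2_rr11, Fin.mk_zero, Fin.mk_one]) | ring | rfl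
      · simp only [Fin.mk_zero, Fin.mk_one] at hval
        exact absurd hval (fun hh => tB_fix1 σ τ hp hh)
  rw [e₁, e₂]

/-- The key weight-preservation identity. -/
lemma weight_eq :
    (∏ i, blk2 BM x₁ x₂ y₁ y₂ w₁₁ w₁₂ w₂₁ w₂₂ i (σ i)) * (∏ r, BM r (τ r)) =
    if tB σ τ then
      (∏ i, blk1 BM x₁ y₂ w₁₂ i (alpha σ τ i)) * (∏ i, blk1 BM x₂ y₁ w₂₁ i (beta σ τ i))
    else
      (∏ i, blk1 BM x₁ y₁ w₁₁ i (alpha σ τ i)) * (∏ i, blk1 BM x₂ y₂ w₂₂ i (beta σ τ i)) := by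
  split_ifs with h
  · rw [Fintype.prod_sum_type, Fintype.prod_sum_type, Fintype.prod_sum_type,
      Fin.prod_univ_two, Fin.prod_univ_one, Fin.prod_univ_one]
    have h1 : (∏ r, blk1 BM x₁ y₂ w₁₂ (.inl r) (alpha σ τ (.inl r))) *
        (∏ r, blk1 BM x₂ y₁ w₂₁ (.inl r) (beta σ τ (.inl r))) =
        (∏ r, blk2 BM x₁ x₂ y₁ y₂ w₁₁ w₁₂ w₂₁ w₂₂ (.inl r) (σ (.inl r))) *
        (∏ r, BM r (τ r)) := by
      rw [← Finset.prod_mul_distrib, ← Finset.prod_mul_distrib]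
      exact Finset.prod_congr rfl fun r _ =>
        row_pos σ τ BM x₁ x₂ y₁ y₂ w₁₁ w₁₂ w₂₁ w₂₂ h r
    have h2 := special_pos σ τ BM x₁ x₂ y₁ y₂ w₁₁ w₁₂ w₂₁ w₂₂ h
    calc ((∏ r, blk2 BM x₁ x₂ y₁ y₂ w₁₁ w₁₂ w₂₁ w₂₂ (.inl r) (σ (.inl r))) *
            (blk2 BM x₁ x₂ y₁ y₂ w₁₁ w₁₂ w₂₁ w₂₂ (.inr 0) (σ (.inr 0)) *
             blk2 BM x₁ x₂ y₁ y₂ w₁₁ w₁₂ w₂₁ w₂₂ (.inr 1) (σ (.inr 1)))) * ∏ r, BM r (τ r)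
        = ((∏ r, blk2 BM x₁ x₂ y₁ y₂ w₁₁ w₁₂ w₂₁ w₂₂ (.inl r) (σ (.inl r))) * ∏ r, BM r (τ r)) *
          (blk2 BM x₁ x₂ y₁ y₂ w₁₁ w₁₂ w₂₁ w₂₂ (.inr 0) (σ (.inr 0)) *
           blk2 BM x₁ x₂ y₁ y₂ w₁₁ w₁₂ w₂₁ w₂₂ (.inr 1) (σ (.inr 1))) := by ring
      _ = ((∏ r, blk1 BM x₁ y₂ w₁₂ (.inl r) (alpha σ τ (.inl r))) *
            (∏ r, blk1 BM x₂ y₁ w₂₁ (.inl r) (beta σ τ (.inl r)))) *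
          (blk1 BM x₁ y₂ w₁₂ (.inr 0) (alpha σ τ (.inr 0)) *
           blk1 BM x₂ y₁ w₂₁ (.inr 0) (beta σ τ (.inr 0))) := by rw [h1, h2]
      _ = (∏ r, blk1 BM x₁ y₂ w₁₂ (.inl r) (alpha σ τ (.inl r))) *
            blk1 BM x₁ y₂ w₁₂ (.inr 0) (alpha σ τ (.inr 0)) *
          ((∏ r, blk1 BM x₂ y₁ w₂₁ (.inl r) (beta σ τ (.inl r))) *
            blk1 BM x₂ y₁ w₂₁ (.inr 0) (beta σ τ (.inr 0))) := by ring
  · rw [Fintype.prod_sum_type, Fintype.prod_sum_type, Fintype.prod_sum_type,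
      Fin.prod_univ_two, Fin.prod_univ_one, Fin.prod_univ_one]
    have h1 : (∏ r, blk1 BM x₁ y₁ w₁₁ (.inl r) (alpha σ τ (.inl r))) *
        (∏ r, blk1 BM x₂ y₂ w₂₂ (.inl r) (beta σ τ (.inl r))) =
        (∏ r, blk2 BM x₁ x₂ y₁ y₂ w₁₁ w₁₂ w₂₁ w₂₂ (.inl r) (σ (.inl r))) *
        (∏ r, BM r (τ r)) := by
      rw [← Finset.prod_mul_distrib, ← Finset.prod_mul_distrib]
      exact Finset.prod_congr rfl fun r _ =>
        row_neg σ τ BM x₁ x₂ y₁ y₂ w₁₁ w₁₂ w₂₁ w₂₂ h r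
    have h2 := special_neg σ τ BM x₁ x₂ y₁ y₂ w₁₁ w₁₂ w₂₁ w₂₂ h
    calc ((∏ r, blk2 BM x₁ x₂ y₁ y₂ w₁₁ w₁₂ w₂₁ w₂₂ (.inl r) (σ (.inl r))) *
            (blk2 BM x₁ x₂ y₁ y₂ w₁₁ w₁₂ w₂₁ w₂₂ (.inr 0) (σ (.inr 0)) *
             blk2 BM x₁ x₂ y₁ y₂ w₁₁ w₁₂ w₂₁ w₂₂ (.inr 1) (σ (.inr 1)))) * ∏ r, BM r (τ r)
        = ((∏ r, blk2 BM x₁ x₂ y₁ y₂ w₁₁ w₁₂ w₂₁ w₂₂ (.inl r) (σ (.inl r))) * ∏ r, BM r (τ r)) *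
          (blk2 BM x₁ x₂ y₁ y₂ w₁₁ w₁₂ w₂₁ w₂₂ (.inr 0) (σ (.inr 0)) *
           blk2 BM x₁ x₂ y₁ y₂ w₁₁ w₁₂ w₂₁ w₂₂ (.inr 1) (σ (.inr 1))) := by ring
      _ = ((∏ r, blk1 BM x₁ y₁ w₁₁ (.inl r) (alpha σ τ (.inl r))) *
            (∏ r, blk1 BM x₂ y₂ w₂₂ (.inl r) (beta σ τ (.inl r)))) *
          (blk1 BM x₁ y₁ w₁₁ (.inr 0) (alpha σ τ (.inr 0)) *
           blk1 BM x₂ y₂ w₂₂ (.inr 0) (beta σ τ (.inr 0))) := by rw [h1, h2]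
      _ = (∏ r, blk1 BM x₁ y₁ w₁₁ (.inl r) (alpha σ τ (.inl r))) *
            blk1 BM x₁ y₁ w₁₁ (.inr 0) (alpha σ τ (.inr 0)) *
          ((∏ r, blk1 BM x₂ y₂ w₂₂ (.inl r) (beta σ τ (.inl r))) *
            blk1 BM x₂ y₂ w₂₂ (.inr 0) (beta σ τ (.inr 0))) := by ring

end Weights


lemma blk1_entry_nonneg {BM : Matrix (Fin d) (Fin d) ℝ} {x y : Fin d → ℝ} {w : ℝ}
    (hB : ∀ i j, 0 ≤ BM i j) (hx : ∀ i, 0 ≤ x i) (hy : ∀ i, 0 ≤ y i) (hw : 0 ≤ w) :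
    ∀ i j, 0 ≤ blk1 BM x y w i j := by
  rintro (r | i) (c | j)
  · exact hB r c
  · exact hy r
  · exact hx c
  · exact hw

def wTf (BM : Matrix (Fin d) (Fin d) ℝ) (x₁ x₂ y₁ y₂ : Fin d → ℝ) (w₁₁ w₁₂ w₂₁ w₂₂ : ℝ) :
    (Perm (Fin d ⊕ Fin 1) × Perm (Fin d ⊕ Fin 1)) ⊕
      (Perm (Fin d ⊕ Fin 1) × Perm (Fin d ⊕ Fin 1)) → ℝ :=
  Sum.elim
    (fun q => (∏ i, blk1 BM x₁ y₁ w₁₁ i (q.1 i)) * ∏ i, blk1 BM x₂ y₂ w₂₂ i (q.2 i))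
    (fun q => (∏ i, blk1 BM x₁ y₂ w₁₂ i (q.1 i)) * ∏ i, blk1 BM x₂ y₁ w₂₁ i (q.2 i))

lemma wTf_inl (q : Perm (Fin d ⊕ Fin 1) × Perm (Fin d ⊕ Fin 1)) :
    wTf BM x₁ x₂ y₁ y₂ w₁₁ w₁₂ w₂₁ w₂₂ (Sum.inl q) =
      (∏ i, blk1 BM x₁ y₁ w₁₁ i (q.1 i)) * ∏ i, blk1 BM x₂ y₂ w₂₂ i (q.2 i) := rfl

lemma wTf_inr (q : Perm (Fin d ⊕ Fin 1) × Perm (Fin d ⊕ Fin 1)) :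
    wTf BM x₁ x₂ y₁ y₂ w₁₁ w₁₂ w₂₁ w₂₂ (Sum.inr q) =
      (∏ i, blk1 BM x₁ y₂ w₁₂ i (q.1 i)) * ∏ i, blk1 BM x₂ y₁ w₂₁ i (q.2 i) := rfl

end
end Stmt5Aux

theorem stmt5 {d : ℕ} (B : Matrix (Fin d) (Fin d) ℝ) (x₁ x₂ y₁ y₂ : Fin d → ℝ)
    (w₁₁ w₁₂ w₂₁ w₂₂ : ℝ)
    (hB : ∀ i j, 0 ≤ B i j) (hx₁ : ∀ i, 0 ≤ x₁ i) (hx₂ : ∀ i, 0 ≤ x₂ i)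
    (hy₁ : ∀ i, 0 ≤ y₁ i) (hy₂ : ∀ i, 0 ≤ y₂ i)
    (hw₁₁ : 0 ≤ w₁₁) (hw₁₂ : 0 ≤ w₁₂) (hw₂₁ : 0 ≤ w₂₁) (hw₂₂ : 0 ≤ w₂₂) :
    per (blk2 B x₁ x₂ y₁ y₂ w₁₁ w₁₂ w₂₁ w₂₂) * per B ≤
      per (blk1 B x₁ y₁ w₁₁) * per (blk1 B x₂ y₂ w₂₂) +
        per (blk1 B x₁ y₂ w₁₂) * per (blk1 B x₂ y₁ w₂₁) := by
  classical
  have hW : ∀ p : Equiv.Perm (Fin d ⊕ Fin 2) × Equiv.Perm (Fin d),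
      (∏ i, blk2 B x₁ x₂ y₁ y₂ w₁₁ w₁₂ w₂₁ w₂₂ i (p.1 i)) * (∏ r, B r (p.2 r)) =
      Stmt5Aux.wTf B x₁ x₂ y₁ y₂ w₁₁ w₁₂ w₂₁ w₂₂ (Stmt5Aux.Phi p) := by
    intro p
    rw [Stmt5Aux.weight_eq p.1 p.2 B x₁ x₂ y₁ y₂ w₁₁ w₁₂ w₂₁ w₂₂]
    by_cases h : Stmt5Aux.tB p.1 p.2
    · rw [if_pos h]
      have hphi : Stmt5Aux.Phi p = Sum.inr (Stmt5Aux.alpha p.1 p.2, Stmt5Aux.beta p.1 p.2) := by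
        rw [Stmt5Aux.Phi, if_pos h]
      rw [hphi, Stmt5Aux.wTf_inr]
    · rw [if_neg h]
      have hphi : Stmt5Aux.Phi p = Sum.inl (Stmt5Aux.alpha p.1 p.2, Stmt5Aux.beta p.1 p.2) := by
        rw [Stmt5Aux.Phi, if_neg h]
      rw [hphi, Stmt5Aux.wTf_inl]
  have hnn : ∀ t, 0 ≤ Stmt5Aux.wTf B x₁ x₂ y₁ y₂ w₁₁ w₁₂ w₂₁ w₂₂ t := by
    rintro (q | q)
    · rw [Stmt5Aux.wTf_inl]
      exact mul_nonneg
        (Finset.prod_nonneg fun i _ => Stmt5Aux.blk1_entry_nonneg hB hx₁ hy₁ hw₁₁ i _)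
        (Finset.prod_nonneg fun i _ => Stmt5Aux.blk1_entry_nonneg hB hx₂ hy₂ hw₂₂ i _)
    · rw [Stmt5Aux.wTf_inr]
      exact mul_nonneg
        (Finset.prod_nonneg fun i _ => Stmt5Aux.blk1_entry_nonneg hB hx₁ hy₂ hw₁₂ i _)
        (Finset.prod_nonneg fun i _ => Stmt5Aux.blk1_entry_nonneg hB hx₂ hy₁ hw₂₁ i _)
  have lhs_eq : per (blk2 B x₁ x₂ y₁ y₂ w₁₁ w₁₂ w₂₁ w₂₂) * per B =
      ∑ p : Equiv.Perm (Fin d ⊕ Fin 2) × Equiv.Perm (Fin d),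
        (∏ i, blk2 B x₁ x₂ y₁ y₂ w₁₁ w₁₂ w₂₁ w₂₂ i (p.1 i)) * (∏ r, B r (p.2 r)) := by
    rw [per, per, Fintype.sum_mul_sum]
    rw [← Finset.univ_product_univ, Finset.sum_product]
  have e1 : per (blk1 B x₁ y₁ w₁₁) * per (blk1 B x₂ y₂ w₂₂) =
      ∑ q : Equiv.Perm (Fin d ⊕ Fin 1) × Equiv.Perm (Fin d ⊕ Fin 1),
        Stmt5Aux.wTf B x₁ x₂ y₁ y₂ w₁₁ w₁₂ w₂₁ w₂₂ (Sum.inl q) := by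
    simp only [Stmt5Aux.wTf_inl]
    rw [per, per, Fintype.sum_mul_sum]
    rw [← Finset.univ_product_univ, Finset.sum_product]
  have e2 : per (blk1 B x₁ y₂ w₁₂) * per (blk1 B x₂ y₁ w₂₁) =
      ∑ q : Equiv.Perm (Fin d ⊕ Fin 1) × Equiv.Perm (Fin d ⊕ Fin 1),
        Stmt5Aux.wTf B x₁ x₂ y₁ y₂ w₁₁ w₁₂ w₂₁ w₂₂ (Sum.inr q) := by
    simp only [Stmt5Aux.wTf_inr]
    rw [per, per, Fintype.sum_mul_sum]
    rw [← Finset.univ_product_univ, Finset.sum_product]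
  calc per (blk2 B x₁ x₂ y₁ y₂ w₁₁ w₁₂ w₂₁ w₂₂) * per B
      = ∑ p : Equiv.Perm (Fin d ⊕ Fin 2) × Equiv.Perm (Fin d),
          Stmt5Aux.wTf B x₁ x₂ y₁ y₂ w₁₁ w₁₂ w₂₁ w₂₂ (Stmt5Aux.Phi p) := by
        rw [lhs_eq]; exact Finset.sum_congr rfl fun p _ => hW p
    _ = ∑ t ∈ Finset.univ.image Stmt5Aux.Phi,
          Stmt5Aux.wTf B x₁ x₂ y₁ y₂ w₁₁ w₁₂ w₂₁ w₂₂ t :=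
        (Finset.sum_image fun p _ q _ h => Stmt5Aux.Phi_injective h).symm
    _ ≤ ∑ t, Stmt5Aux.wTf B x₁ x₂ y₁ y₂ w₁₁ w₁₂ w₂₁ w₂₂ t :=
        Finset.sum_le_sum_of_subset_of_nonneg (Finset.subset_univ _) fun t _ _ => hnn t
    _ = (∑ q : Equiv.Perm (Fin d ⊕ Fin 1) × Equiv.Perm (Fin d ⊕ Fin 1),
          Stmt5Aux.wTf B x₁ x₂ y₁ y₂ w₁₁ w₁₂ w₂₁ w₂₂ (Sum.inl q)) +
        (∑ q : Equiv.Perm (Fin d ⊕ Fin 1) × Equiv.Perm (Fin d ⊕ Fin 1),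
          Stmt5Aux.wTf B x₁ x₂ y₁ y₂ w₁₁ w₁₂ w₂₁ w₂₂ (Sum.inr q)) :=
        Fintype.sum_sum_type _
    _ = per (blk1 B x₁ y₁ w₁₁) * per (blk1 B x₂ y₂ w₂₂) +
        per (blk1 B x₁ y₂ w₁₂) * per (blk1 B x₂ y₁ w₂₁) := by rw [e1, e2]
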